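/- For integers t > 1, k ≥ 1, and n ≥ 2k, if an n-vertex k-uniform hypergraph H has at least t·C(n-1, k-1) edges, then H contains a matching of size max{2, ⌈t/k⌉}. -/

import Mathlib

/-- For integers t > 1, k ≥ 1, and n ≥ 2k, if an n-vertex k-uniform
hypergraph H has at least t·C(n-1, k-1) edges, then H contains a matching of size
max {2, ⌈t/k⌉}. -/
theorem stmt_0 {α : Type*} [Fintype α] [DecidableEq α] (t k : ℕ) (ht : 1 < t) (hk : 1 ≤ k)
    (hn : 2 * k ≤ Fintype.card α)
    (H : Finset (Finset α)) (hunif : ∀ e ∈ H, e.card = k)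
    (hcard : t * (Fintype.card α - 1).choose (k - 1) ≤ H.card) :
    ∃ M ⊆ H, M.card = max 2 ((t + k - 1) / k) ∧
      (↑M : Set (Finset α)).Pairwise Disjoint := by
  classical
  set n := Fintype.card α with hn'
  have hC : 0 < (n - 1).choose (k - 1) := Nat.choose_pos (by omega)
  -- pick a maximum matching M
  have hne : (H.powerset.filter
      (fun M : Finset (Finset α) => (↑M : Set (Finset α)).Pairwise Disjoint)).Nonempty :=
    ⟨∅, by simp⟩
  obtain ⟨M, hMmem, hMmax⟩ := Finset.exists_max_image _ Finset.card hne
  simp only [Finset.mem_filter, Finset.mem_powerset] at hMmem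
  obtain ⟨hMH, hMdisj⟩ := hMmem
  have hmax : ∀ M' ⊆ H, (↑M' : Set (Finset α)).Pairwise Disjoint →
      M'.card ≤ M.card := fun M' h1 h2 =>
    hMmax M' (Finset.mem_filter.2 ⟨Finset.mem_powerset.2 h1, h2⟩)
  set m := max 2 ((t + k - 1) / k) with hm
  -- H is intersecting if max matching ≤ 1
  have hMcard : m ≤ M.card := by
    by_contra hlt
    push_neg at hlt
    -- every edge of H meets some edge of M
    have hmeet : ∀ e ∈ H, ∃ f ∈ M, ¬ Disjoint e f := by
      intro e he
      by_contra hcon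
      push_neg at hcon
      have heM : e ∉ M := by
        intro heM
        have h0 := hcon e heM
        rw [disjoint_self] at h0
        have := hunif e he
        rw [h0] at this
        simp at this
        omega
      have hpw : ((insert e M : Finset (Finset α)) : Set (Finset α)).Pairwise Disjoint := by
        rw [Finset.coe_insert]
        exact Set.pairwise_insert_of_symmetric.2
          ⟨hMdisj, fun f hf _ => hcon f hf⟩
      have hcard' := hmax (insert e M) (Finset.insert_subset he hMH) hpw
      rw [Finset.card_insert_of_notMem heM] at hcard'
      omega
    set S := M.biUnion id with hS
    have hHsub : H ⊆ S.biUnion (fun v => H.filter (fun e => v ∈ e)) := by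
      intro e he
      obtain ⟨f, hf, hnd⟩ := hmeet e he
      rw [Finset.not_disjoint_iff] at hnd
      obtain ⟨v, hv1, hv2⟩ := hnd
      exact Finset.mem_biUnion.2 ⟨v, Finset.mem_biUnion.2 ⟨f, hf, hv2⟩,
        Finset.mem_filter.2 ⟨he, hv1⟩⟩
    have hcount : ∀ v : α, (H.filter (fun e => v ∈ e)).card ≤ (n - 1).choose (k - 1) := by
      intro v
      have hle : (H.filter (fun e => v ∈ e)).card ≤
          ((Finset.univ.erase v).powersetCard (k - 1)).card := by
        apply Finset.card_le_card_of_injOn (fun e => e.erase v)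
        · intro e he
          simp only [Finset.coe_filter, Set.mem_setOf_eq] at he
          rw [Finset.mem_coe, Finset.mem_powersetCard]
          refine ⟨fun x hx => ?_, by rw [Finset.card_erase_of_mem he.2, hunif e he.1]⟩
          rw [Finset.mem_erase] at hx ⊢
          exact ⟨hx.1, Finset.mem_univ x⟩
        · intro a ha b hb hab
          simp only [Finset.coe_filter, Set.mem_setOf_eq] at ha hb
          have := congrArg (insert v) hab
          rwa [Finset.insert_erase ha.2, Finset.insert_erase hb.2] at this
      rwa [Finset.card_powersetCard, Finset.card_erase_of_mem (Finset.mem_univ v),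
        Finset.card_univ] at hle
    have hScard : S.card ≤ M.card * k := by
      calc S.card ≤ ∑ f ∈ M, (id f).card := Finset.card_biUnion_le
        _ = ∑ _f ∈ M, k := Finset.sum_congr rfl (fun f hf => hunif f (hMH hf))
        _ = M.card * k := by rw [Finset.sum_const, smul_eq_mul]
    have hHcard : H.card ≤ M.card * k * ((n - 1).choose (k - 1)) := by
      calc H.card ≤ (S.biUnion (fun v => H.filter (fun e => v ∈ e))).card :=
            Finset.card_le_card hHsub
        _ ≤ ∑ v ∈ S, (H.filter (fun e => v ∈ e)).card := Finset.card_biUnion_le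
        _ ≤ ∑ _v ∈ S, (n - 1).choose (k - 1) := Finset.sum_le_sum (fun v _ => hcount v)
        _ = S.card * ((n - 1).choose (k - 1)) := by rw [Finset.sum_const, smul_eq_mul]
        _ ≤ M.card * k * ((n - 1).choose (k - 1)) := Nat.mul_le_mul_right _ hScard
    by_cases hcase : M.card * k < t
    · have h1 : M.card * k * ((n - 1).choose (k - 1)) < t * ((n - 1).choose (k - 1)) :=
        (Nat.mul_lt_mul_right hC).2 hcase
      omega
    · push_neg at hcase
      -- ⌈t/k⌉ ≤ M.card, so M.card ≤ 1
      have h1 : (t + k - 1) / k ≤ M.card := by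
        have h2 : t + k - 1 ≤ k * M.card + (k - 1) := by
          rw [mul_comm]; omega
        calc (t + k - 1) / k ≤ (k * M.card + (k - 1)) / k := Nat.div_le_div_right h2
          _ = M.card + (k - 1) / k := Nat.mul_add_div (by omega) _ _
          _ = M.card := by rw [Nat.div_eq_of_lt (by omega)]; omega
      have h2 : M.card < 2 := by
        by_contra h
        push_neg at h
        have : m ≤ M.card := max_le h h1
        omega
      -- H is intersecting: else a matching of size 2 exists
      have hint : (↑H : Set (Finset α)).Intersecting := by
        intro a ha b hb hd
        by_cases hab : a = b
        · subst hab
          rw [disjoint_self] at hd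
          have := hunif a ha
          rw [hd] at this
          simp at this
          omega
        · have hpw : (({a, b} : Finset (Finset α)) : Set (Finset α)).Pairwise Disjoint := by
            rw [Finset.coe_pair]
            exact Set.pairwise_pair_of_symmetric.2 (fun _ => hd)
          have := hmax {a, b} (by
            intro x hx
            rcases Finset.mem_insert.1 hx with h | h
            · exact h ▸ ha
            · exact (Finset.mem_singleton.1 h) ▸ hb) hpw
          rw [Finset.card_pair hab] at this
          omega
      -- transfer to Fin n and apply Erdős–Ko–Rado
      have f := Fintype.equivFin α
      set 𝒜 : Finset (Finset (Fin n)) := H.image (fun e => e.map f.toEmbedding) with h𝒜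
      have hcard𝒜 : 𝒜.card = H.card :=
        Finset.card_image_of_injective _ (Finset.map_injective f.toEmbedding)
      have hsized : (↑𝒜 : Set (Finset (Fin n))).Sized k := by
        intro A hA
        simp only [h𝒜, Finset.coe_image, Set.mem_image, Finset.mem_coe] at hA
        obtain ⟨e, he, rfl⟩ := hA
        rw [Finset.card_map]
        exact hunif e he
      have hint𝒜 : (↑𝒜 : Set (Finset (Fin n))).Intersecting := by
        intro a ha b hb hd
        simp only [h𝒜, Finset.coe_image, Set.mem_image, Finset.mem_coe] at ha hb
        obtain ⟨e, he, rfl⟩ := ha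
        obtain ⟨e', he', rfl⟩ := hb
        rw [Finset.disjoint_map] at hd
        exact hint he he' hd
      have hEKR := Finset.erdos_ko_rado hint𝒜 hsized
        (by rw [Nat.le_div_iff_mul_le (by norm_num)]; omega)
      rw [hcard𝒜] at hEKR
      have h3 : 2 * ((n - 1).choose (k - 1)) ≤ (n - 1).choose (k - 1) :=
        le_trans (Nat.mul_le_mul_right _ ht) (le_trans hcard hEKR)
      omega
  obtain ⟨M', hM'sub, hM'card⟩ := Finset.exists_subset_card_eq hMcard
  exact ⟨M', hM'sub.trans hMH, hM'card, hMdisj.mono (Finset.coe_subset.2 hM'sub)⟩
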